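/- arXiv:1707.03994 — 8 statements merged into one kernel-verified Lean document; each statement's English description precedes it below -/
import Mathlib

section
/- Let T be an invertible bounded linear operator on a separable Banach space X. If T is hypercyclic (i.e., admits a vector x whose orbit {T^n x : n ≥ 0} is dense in X), then T⁻¹ is also hypercyclic. -/
open Set TopologicalSpace

private lemma symm_pow_apply_pow_apply
    {X : Type*} [NormedAddCommGroup X] [NormedSpace ℝ X]
    (T : X ≃L[ℝ] X) : ∀ (n : ℕ) (x : X),
    ((T.symm : X →L[ℝ] X) ^ n) (((T : X →L[ℝ] X) ^ n) x) = x := by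
  intro n
  induction n with
  | zero => intro x; simp
  | succ n ih =>
    intro x
    rw [pow_succ, pow_succ']
    simp only [ContinuousLinearMap.mul_apply]
    rw [ContinuousLinearEquiv.coe_coe, ContinuousLinearEquiv.coe_coe,
      T.symm_apply_apply]
    exact ih x

theorem inverse_of_hypercyclic_is_hypercyclic
    {X : Type*} [NormedAddCommGroup X] [NormedSpace ℝ X] [CompleteSpace X]
    [TopologicalSpace.SeparableSpace X]
    (T : X ≃L[ℝ] X)
    (hT : ∃ x : X, Dense (Set.range fun n : ℕ => ((T : X →L[ℝ] X) ^ n) x)) :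
    ∃ x : X, Dense (Set.range fun n : ℕ => ((T.symm : X →L[ℝ] X) ^ n) x) := by
  obtain ⟨x₀, hx₀⟩ := hT
  by_cases hsub : Subsingleton X
  · refine ⟨x₀, fun y => ?_⟩
    have : y = ((T.symm : X →L[ℝ] X) ^ 0) x₀ := Subsingleton.elim _ _
    exact this ▸ subset_closure ⟨0, rfl⟩
  · haveI : Nontrivial X := not_subsingleton_iff_nontrivial.mp hsub
    haveI : ∀ x : X, Filter.NeBot (nhdsWithin x {x}ᶜ) :=
      fun x => Module.punctured_nhds_neBot ℝ X x
    set f : X →L[ℝ] X := (T : X →L[ℝ] X) with hf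
    set g : X →L[ℝ] X := (T.symm : X →L[ℝ] X) with hg
    -- topological transitivity of T
    have trans : ∀ V U : Set X, IsOpen V → IsOpen U → V.Nonempty → U.Nonempty →
        ∃ (n : ℕ) (v : X), v ∈ V ∧ (f ^ n) v ∈ U := by
      intro V U hV hU hVne hUne
      obtain ⟨_, ⟨m, rfl⟩, hmV⟩ := hx₀.exists_mem_open hV hVne
      set F : ℕ → X := fun k => (f ^ k) x₀ with hF
      have htail : Dense (Set.range F \ F '' Set.Iio m) :=
        hx₀.diff_finite ((Set.finite_Iio m).image F)
      obtain ⟨y, ⟨⟨k, rfl⟩, hknot⟩, hyU⟩ := htail.exists_mem_open hU hUne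
      have hkm : m ≤ k := by
        by_contra h
        exact hknot ⟨k, Set.mem_Iio.2 (Nat.lt_of_not_le h), rfl⟩
      refine ⟨k - m, F m, hmV, ?_⟩
      have : (f ^ (k - m)) (F m) = F k := by
        simp only [hF, ← ContinuousLinearMap.mul_apply, ← pow_add,
          Nat.sub_add_cancel hkm]
      rwa [this]
    -- Birkhoff transitivity argument for T.symm
    have fg : ∀ (n : ℕ) (x : X), (g ^ n) ((f ^ n) x) = x :=
      symm_pow_apply_pow_apply T
    haveI : SecondCountableTopology X := by infer_instance
    obtain ⟨B, hBc, -, hB⟩ := exists_countable_basis X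
    set G : Set X → Set X := fun V => ⋃ n : ℕ, (g ^ n) ⁻¹' V with hG
    set 𝒢 : Set (Set X) := G '' {V ∈ B | V.Nonempty} with h𝒢
    have hdense : Dense (⋂₀ 𝒢) := by
      apply dense_sInter_of_isOpen
      · rintro s ⟨V, ⟨hVB, -⟩, rfl⟩
        exact isOpen_iUnion fun n => (hB.isOpen hVB).preimage (g ^ n).continuous
      · exact (hBc.mono (Set.sep_subset _ _)).image _
      · rintro s ⟨V, ⟨hVB, hVne⟩, rfl⟩
        rw [dense_iff_inter_open]
        intro U hU hUne
        obtain ⟨n, v, hvV, hvU⟩ := trans V U (hB.isOpen hVB) hU hVne hUne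
        refine ⟨(f ^ n) v, hvU, Set.mem_iUnion.2 ⟨n, ?_⟩⟩
        show (g ^ n) ((f ^ n) v) ∈ V
        rw [fg]
        exact hvV
    obtain ⟨x, hx⟩ := hdense.nonempty
    refine ⟨x, fun y => ?_⟩
    rw [mem_closure_iff]
    intro U hU hyU
    obtain ⟨V, hVB, hyV, hVU⟩ := hB.exists_subset_of_mem_open hyU hU
    have hxG : x ∈ G V := hx _ ⟨V, ⟨hVB, ⟨y, hyV⟩⟩, rfl⟩
    obtain ⟨n, hxn⟩ := Set.mem_iUnion.1 hxG
    exact ⟨(g ^ n) x, hVU hxn, ⟨n, rfl⟩⟩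
end

section
/- Let T be an invertible bounded linear operator on a Banach space X. If T is chaotic (hypercyclic with a dense set of periodic points), then T⁻¹ is chaotic. -/
open Set Topology

section Aux

variable {X : Type*} [NormedAddCommGroup X] [NormedSpace ℝ X]

lemma symm_pow_cancel (T : X ≃L[ℝ] X) (n : ℕ) (x : X) :
    ((T.symm : X →L[ℝ] X) ^ n) (((T : X →L[ℝ] X) ^ n) x) = x := by
  have h1 : (T.symm : X →L[ℝ] X) * (T : X →L[ℝ] X) = 1 := by
    ext y; simp [ContinuousLinearMap.mul_apply]
  have h2 : (T : X →L[ℝ] X) * (T.symm : X →L[ℝ] X) = 1 := by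
    ext y; simp [ContinuousLinearMap.mul_apply]
  have hc : Commute (T.symm : X →L[ℝ] X) (T : X →L[ℝ] X) := by
    unfold Commute SemiconjBy; rw [h1, h2]
  have : ((T.symm : X →L[ℝ] X) ^ n) * ((T : X →L[ℝ] X) ^ n) = 1 := by
    rw [← hc.mul_pow, h1, one_pow]
  calc ((T.symm : X →L[ℝ] X) ^ n) (((T : X →L[ℝ] X) ^ n) x)
      = (((T.symm : X →L[ℝ] X) ^ n) * ((T : X →L[ℝ] X) ^ n)) x := rfl
    _ = x := by rw [this]; rfl

lemma pow_cancel_symm (T : X ≃L[ℝ] X) (n : ℕ) (x : X) :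
    ((T : X →L[ℝ] X) ^ n) (((T.symm : X →L[ℝ] X) ^ n) x) = x := by
  have := symm_pow_cancel T.symm n x
  simpa using this

end Aux

theorem inverse_of_chaotic_is_chaotic
    {X : Type*} [NormedAddCommGroup X] [NormedSpace ℝ X] [CompleteSpace X]
    [TopologicalSpace.SeparableSpace X]
    (T : X ≃L[ℝ] X)
    (hHC : ∃ x : X, Dense (Set.range fun n : ℕ => ((T : X →L[ℝ] X) ^ n) x))
    (hPer : Dense {x : X | ∃ n : ℕ, 1 ≤ n ∧ ((T : X →L[ℝ] X) ^ n) x = x}) :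
    (∃ x : X, Dense (Set.range fun n : ℕ => ((T.symm : X →L[ℝ] X) ^ n) x)) ∧
      Dense {x : X | ∃ n : ℕ, 1 ≤ n ∧ ((T.symm : X →L[ℝ] X) ^ n) x = x} := by
  set S : X →L[ℝ] X := (T.symm : X →L[ℝ] X) with hS
  set T' : X →L[ℝ] X := (T : X →L[ℝ] X) with hT'
  constructor
  · -- hypercyclicity of the inverse
    rcases subsingleton_or_nontrivial X with hsub | hnt
    · refine ⟨0, ?_⟩
      intro y
      have : y = ((S ^ 0) 0) := Subsingleton.elim _ _
      rw [this]
      exact subset_closure ⟨0, rfl⟩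
    · obtain ⟨x, hx⟩ := hHC
      -- transitivity of T
      have htrans : ∀ U V : Set X, IsOpen U → U.Nonempty → IsOpen V → V.Nonempty →
          ∃ (n : ℕ) (u : X), u ∈ U ∧ (T' ^ n) u ∈ V := by
        intro U V hU hUne hV hVne
        obtain ⟨_, ⟨m, rfl⟩, hmem⟩ := hx.exists_mem_open hU hUne
        set F : Set X := (fun n : ℕ => (T' ^ n) x) '' (Set.Iio m) with hF
        have hFfin : F.Finite := (Set.finite_Iio m).image _
        have hdense2 : Dense ((Set.range fun n : ℕ => (T' ^ n) x) \ F) :=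
          hx.diff_finite hFfin
        obtain ⟨_, ⟨⟨k, rfl⟩, hkF⟩, hmemV⟩ := hdense2.exists_mem_open hV hVne
        have hkm : m ≤ k := by
          by_contra h
          exact hkF ⟨k, Set.mem_Iio.mpr (by omega), rfl⟩
        refine ⟨k - m, (T' ^ m) x, hmem, ?_⟩
        have : (T' ^ (k - m)) ((T' ^ m) x) = (T' ^ k) x := by
          rw [← ContinuousLinearMap.mul_apply, ← pow_add]
          rw [Nat.sub_add_cancel hkm]
        rw [this]; exact hmemV
      -- density of ⋃ n, (S^n) ⁻¹' V for each open nonempty V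
      have hSdense : ∀ V : Set X, IsOpen V → V.Nonempty →
          Dense (⋃ n : ℕ, (fun y => (S ^ n) y) ⁻¹' V) := by
        intro V hV hVne
        rw [dense_iff_inter_open]
        intro U hU hUne
        obtain ⟨n, w, hwV, hwU⟩ := htrans V U hV hVne hU hUne
        refine ⟨(T' ^ n) w, hwU, Set.mem_iUnion.2 ⟨n, ?_⟩⟩
        show (S ^ n) ((T' ^ n) w) ∈ V
        rw [symm_pow_cancel T n w]
        exact hwV
      -- Baire category argument
      obtain ⟨b, hbcount, hbnempty, hbasis⟩ := TopologicalSpace.exists_countable_basis X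
      have hG : Dense (⋂ V ∈ b, ⋃ n : ℕ, (fun y => (S ^ n) y) ⁻¹' V) := by
        refine dense_biInter_of_isOpen ?_ hbcount ?_
        · intro V hV
          exact isOpen_iUnion fun n => ((hS ▸ rfl : (S ^ n) = (S ^ n)) ▸
            ((S ^ n).continuous.isOpen_preimage V (hbasis.isOpen hV)))
        · intro V hV
          exact hSdense V (hbasis.isOpen hV) (Set.nonempty_iff_ne_empty.2 (fun h => hbnempty (h ▸ hV)))
      obtain ⟨y, hy⟩ := hG.nonempty
      refine ⟨y, ?_⟩
      rw [dense_iff_inter_open]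
      intro W hW hWne
      obtain ⟨w, hwW⟩ := hWne
      obtain ⟨V, hVb, hwV, hVW⟩ := hbasis.exists_subset_of_mem_open hwW hW
      have := Set.mem_iInter₂.1 hy V hVb
      obtain ⟨n, hn⟩ := Set.mem_iUnion.1 this
      exact ⟨(S ^ n) y, hVW hn, ⟨n, rfl⟩⟩
  · -- periodic points
    have heq : {x : X | ∃ n : ℕ, 1 ≤ n ∧ (S ^ n) x = x}
        = {x : X | ∃ n : ℕ, 1 ≤ n ∧ (T' ^ n) x = x} := by
      ext y
      constructor
      · rintro ⟨n, hn, h⟩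
        exact ⟨n, hn, by calc (T' ^ n) y = (T' ^ n) ((S ^ n) y) := by rw [h]
          _ = y := pow_cancel_symm T n y⟩
      · rintro ⟨n, hn, h⟩
        exact ⟨n, hn, by calc (S ^ n) y = (S ^ n) ((T' ^ n) y) := by rw [h]
          _ = y := symm_pow_cancel T n y⟩
    rw [heq]
    exact hPer
end

section
/- Let X be a Banach sequence space over ℤ in which the unit vectors (e_n) form a basis, with the norm |||x||| = sup_{m,n≥0} ‖∑_{−m≤k≤n} x_k e_k‖. Define X̂ = {x ∈ 𝕂^ℤ : |||x||| < ∞}. Then X̂, equipped with |||·|||, is a Banach space, it is a Banach sequence space (coordinate functionals are continuous), and X is a closed subspace of X̂. -/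
noncomputable def partialSum {X : Type*} [NormedAddCommGroup X] [NormedSpace ℝ X]
    (e : ℤ → X) (x : ℤ → ℝ) (mn : ℕ × ℕ) : X :=
  ∑ k ∈ Finset.Icc (-(mn.1 : ℤ)) (mn.2 : ℤ), x k • e k

noncomputable def tnorm {X : Type*} [NormedAddCommGroup X] [NormedSpace ℝ X]
    (e : ℤ → X) (x : ℤ → ℝ) : ℝ :=
  ⨆ mn : ℕ × ℕ, ‖partialSum e x mn‖

/-- `X̂ = {x ∈ 𝕂^ℤ : |||x||| < ∞}`. -/
def Xhat {X : Type*} [NormedAddCommGroup X] [NormedSpace ℝ X]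
    (e : ℤ → X) : Set (ℤ → ℝ) :=
  {x | BddAbove (Set.range fun mn : ℕ × ℕ => ‖partialSum e x mn‖)}

open Filter

namespace XhatAux

variable {X : Type*} [NormedAddCommGroup X] [NormedSpace ℝ X] (e : ℤ → X)

lemma partialSum_add (x y : ℤ → ℝ) (mn : ℕ × ℕ) :
    partialSum e (x + y) mn = partialSum e x mn + partialSum e y mn := by
  simp [partialSum, add_smul, Finset.sum_add_distrib]

lemma partialSum_sub (x y : ℤ → ℝ) (mn : ℕ × ℕ) :
    partialSum e (x - y) mn = partialSum e x mn - partialSum e y mn := by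
  simp [partialSum, sub_smul, Finset.sum_sub_distrib]

lemma partialSum_smul (c : ℝ) (x : ℤ → ℝ) (mn : ℕ × ℕ) :
    partialSum e (c • x) mn = c • partialSum e x mn := by
  simp [partialSum, Finset.smul_sum, smul_smul]

lemma partialSum_neg (x : ℤ → ℝ) (mn : ℕ × ℕ) :
    partialSum e (-x) mn = -(partialSum e x mn) := by
  simp [partialSum, neg_smul]

variable {e}

lemma norm_ps_le {x : ℤ → ℝ} (hx : x ∈ Xhat e) (mn : ℕ × ℕ) :
    ‖partialSum e x mn‖ ≤ tnorm e x :=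
  le_ciSup hx mn

lemma tnorm_nonneg' {x : ℤ → ℝ} (hx : x ∈ Xhat e) : 0 ≤ tnorm e x :=
  (norm_nonneg _).trans (norm_ps_le hx (0, 0))

lemma mem_of_forall_le {x : ℤ → ℝ} {c : ℝ} (h : ∀ mn, ‖partialSum e x mn‖ ≤ c) :
    x ∈ Xhat e :=
  ⟨c, by rintro r ⟨mn, rfl⟩; exact h mn⟩

lemma tnorm_neg (x : ℤ → ℝ) : tnorm e (-x) = tnorm e x := by
  unfold tnorm
  congr 1; funext mn; rw [partialSum_neg, norm_neg]

lemma add_mem_tnorm {x y : ℤ → ℝ} (hx : x ∈ Xhat e) (hy : y ∈ Xhat e) :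
    x + y ∈ Xhat e ∧ tnorm e (x + y) ≤ tnorm e x + tnorm e y := by
  have hb : ∀ mn, ‖partialSum e (x + y) mn‖ ≤ tnorm e x + tnorm e y := by
    intro mn
    rw [partialSum_add]
    exact (norm_add_le _ _).trans (add_le_add (norm_ps_le hx mn) (norm_ps_le hy mn))
  exact ⟨mem_of_forall_le hb, ciSup_le hb⟩

lemma tnorm_smul (c : ℝ) (x : ℤ → ℝ) : tnorm e (c • x) = |c| * tnorm e x := by
  calc tnorm e (c • x) = ⨆ mn : ℕ × ℕ, |c| * ‖partialSum e x mn‖ := by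
        unfold tnorm
        congr 1; funext mn; rw [partialSum_smul, norm_smul, Real.norm_eq_abs]
    _ = |c| * tnorm e x := (Real.mul_iSup_of_nonneg (abs_nonneg c) _).symm

lemma smul_mem {x : ℤ → ℝ} (c : ℝ) (hx : x ∈ Xhat e) : c • x ∈ Xhat e := by
  refine mem_of_forall_le (c := |c| * tnorm e x) fun mn => ?_
  rw [partialSum_smul, norm_smul, Real.norm_eq_abs]
  exact mul_le_mul_of_nonneg_left (norm_ps_le hx mn) (abs_nonneg c)

lemma sub_mem {x y : ℤ → ℝ} (hx : x ∈ Xhat e) (hy : y ∈ Xhat e) :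
    x - y ∈ Xhat e := by
  have h := (add_mem_tnorm hx (smul_mem (-1 : ℝ) hy)).1
  rwa [neg_one_smul, ← sub_eq_add_neg] at h

lemma tnorm_sub_comm (x y : ℤ → ℝ) : tnorm e (x - y) = tnorm e (y - x) := by
  rw [← tnorm_neg (x - y), neg_sub]

end XhatAux

namespace XhatAux

variable {X : Type*} [NormedAddCommGroup X] [NormedSpace ℝ X] {e : ℤ → X}

lemma coord (k : ℤ) (hek : e k ≠ 0) :
    ∃ C : ℝ, 0 < C ∧ ∀ x ∈ Xhat e, |x k| ≤ C * tnorm e x := by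
  have hpos : 0 < ‖e k‖ := norm_pos_iff.2 hek
  refine ⟨2 / ‖e k‖, by positivity, fun x hx => ?_⟩
  have key : ∀ a b : ℕ × ℕ, x k • e k = partialSum e x a - partialSum e x b →
      |x k| * ‖e k‖ ≤ 2 * tnorm e x := by
    intro a b hab
    have ha := norm_ps_le hx a
    have hb := norm_ps_le hx b
    calc |x k| * ‖e k‖ = ‖x k • e k‖ := by rw [norm_smul, Real.norm_eq_abs]
      _ = ‖partialSum e x a - partialSum e x b‖ := by rw [hab]
      _ ≤ ‖partialSum e x a‖ + ‖partialSum e x b‖ := norm_sub_le _ _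
      _ ≤ 2 * tnorm e x := by linarith
  have hk : |x k| * ‖e k‖ ≤ 2 * tnorm e x := by
    rcases lt_trichotomy k 0 with hlt | rfl | hgt
    · refine key ((-k).toNat, 0) ((-k).toNat - 1, 0) ?_
      have hs : Finset.Icc (-((((-k).toNat, (0:ℕ)).1 : ℕ) : ℤ)) ((((-k).toNat, (0:ℕ)).2 : ℕ) : ℤ)
          = insert k (Finset.Icc (-(((((-k).toNat - 1, (0:ℕ)).1 : ℕ)) : ℤ))
              (((((-k).toNat - 1, (0:ℕ)).2 : ℕ)) : ℤ)) := by
        ext j; simp; omega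
      unfold partialSum
      rw [hs, Finset.sum_insert (by simp; omega)]
      abel
    · -- k = 0
      have h0 : x 0 • e 0 = partialSum e x (0, 0) := by
        unfold partialSum; simp
      have := norm_ps_le hx (0, 0)
      have hnn := tnorm_nonneg' hx
      calc |x 0| * ‖e 0‖ = ‖x 0 • e 0‖ := by rw [norm_smul, Real.norm_eq_abs]
        _ = ‖partialSum e x (0, 0)‖ := by rw [h0]
        _ ≤ 2 * tnorm e x := by linarith
    · refine key (0, k.toNat) (0, k.toNat - 1) ?_
      have hs : Finset.Icc (-((((0:ℕ), k.toNat).1 : ℕ) : ℤ)) ((((0:ℕ), k.toNat).2 : ℕ) : ℤ)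
          = insert k (Finset.Icc (-(((((0:ℕ), k.toNat - 1).1 : ℕ)) : ℤ))
              (((((0:ℕ), k.toNat - 1).2 : ℕ)) : ℤ)) := by
        ext j; simp; omega
      unfold partialSum
      rw [hs, Finset.sum_insert (by simp; omega)]
      abel
  rw [div_mul_eq_mul_div, le_div_iff₀ hpos]
  linarith

lemma sum_Ioc_glue (f : ℤ → X) {a b c : ℤ} (h1 : a ≤ b) (h2 : b ≤ c) :
    ∑ i ∈ Finset.Ioc a b, f i + ∑ i ∈ Finset.Ioc b c, f i = ∑ i ∈ Finset.Ioc a c, f i := by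
  rw [← Finset.sum_union (Finset.disjoint_left.2 (by intro x hx hx'; simp at hx hx'; omega))]
  congr 1
  ext j; simp; omega

lemma partialSum_eq_Ioc (e : ℤ → X) (x : ℤ → ℝ) (mn : ℕ × ℕ) :
    partialSum e x mn = ∑ k ∈ Finset.Ioc (-(mn.1 : ℤ) - 1) (mn.2 : ℤ), x k • e k := by
  unfold partialSum; congr 1; ext j; simp

lemma mem_of_tendsto (e : ℤ → X) (x : ℤ → ℝ) (z : X)
    (h : Tendsto (fun mn : ℕ × ℕ => partialSum e x mn) atTop (nhds z)) :
    x ∈ Xhat e := by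
  obtain ⟨P, hP⟩ := Metric.tendsto_atTop.1 h 1 one_pos
  set M := P.1 with hM
  set N := P.2 with hN
  set f : ℤ → X := fun k => x k • e k with hf
  set K : ℝ := ∑ k ∈ Finset.Icc (-(M : ℤ)) (N : ℤ), ‖f k‖ with hK
  refine mem_of_forall_le (c := ‖z‖ + 1 + K + K) ?_
  rintro ⟨m, n⟩
  have c01 : (-(((m ⊔ M : ℕ) : ℤ)) - 1 : ℤ) ≤ -(m : ℤ) - 1 := by
    have : ((m : ℕ) : ℤ) ≤ ((m ⊔ M : ℕ) : ℤ) := by exact_mod_cast le_sup_left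
    omega
  have c12 : (-(m : ℤ) - 1 : ℤ) ≤ (n : ℤ) := by omega
  have c23 : ((n : ℕ) : ℤ) ≤ ((n ⊔ N : ℕ) : ℤ) := by exact_mod_cast le_sup_left
  have hsp1 := sum_Ioc_glue f c01 c12
  have hsp2 := sum_Ioc_glue f (c01.trans c12) c23
  have hS : partialSum e x (m ⊔ M, n ⊔ N)
      = ∑ k ∈ Finset.Ioc (-(((m ⊔ M : ℕ) : ℤ)) - 1) ((n ⊔ N : ℕ) : ℤ), f k :=
    partialSum_eq_Ioc e x _
  have hB : partialSum e x (m, n) = ∑ k ∈ Finset.Ioc (-(m : ℤ) - 1) (n : ℤ), f k :=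
    partialSum_eq_Ioc e x _
  have hdecomp : partialSum e x (m, n) = partialSum e x (m ⊔ M, n ⊔ N)
      - (∑ k ∈ Finset.Ioc (-(((m ⊔ M : ℕ) : ℤ)) - 1) (-(m : ℤ) - 1), f k)
      - (∑ k ∈ Finset.Ioc ((n : ℕ) : ℤ) ((n ⊔ N : ℕ) : ℤ), f k) := by
    rw [hB, hS, ← hsp2, ← hsp1]; abel
  have hSle : ‖partialSum e x (m ⊔ M, n ⊔ N)‖ ≤ ‖z‖ + 1 := by
    have hle : P ≤ (m ⊔ M, n ⊔ N) := by
      rw [Prod.le_def]; exact ⟨le_sup_right, le_sup_right⟩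
    have h1 := hP _ hle
    rw [dist_eq_norm] at h1
    have h2 := norm_sub_norm_le (partialSum e x (m ⊔ M, n ⊔ N)) z
    linarith
  have hA : ‖∑ k ∈ Finset.Ioc (-(((m ⊔ M : ℕ) : ℤ)) - 1) (-(m : ℤ) - 1), f k‖ ≤ K := by
    refine (norm_sum_le _ _).trans ?_
    refine Finset.sum_le_sum_of_subset_of_nonneg ?_ (fun i _ _ => norm_nonneg _)
    intro j hj
    simp only [Finset.mem_Ioc, Finset.mem_Icc] at hj ⊢
    have hcast : ((m ⊔ M : ℕ) : ℤ) = max (m : ℤ) (M : ℤ) := by push_cast; rfl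
    rw [hcast] at hj
    omega
  have hC : ‖∑ k ∈ Finset.Ioc ((n : ℕ) : ℤ) ((n ⊔ N : ℕ) : ℤ), f k‖ ≤ K := by
    refine (norm_sum_le _ _).trans ?_
    refine Finset.sum_le_sum_of_subset_of_nonneg ?_ (fun i _ _ => norm_nonneg _)
    intro j hj
    simp only [Finset.mem_Ioc, Finset.mem_Icc] at hj ⊢
    have hcast : ((n ⊔ N : ℕ) : ℤ) = max (n : ℤ) (N : ℤ) := by push_cast; rfl
    rw [hcast] at hj
    omega
  calc ‖partialSum e x (m, n)‖
      ≤ ‖partialSum e x (m ⊔ M, n ⊔ N)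
          - (∑ k ∈ Finset.Ioc (-(((m ⊔ M : ℕ) : ℤ)) - 1) (-(m : ℤ) - 1), f k)‖
        + ‖∑ k ∈ Finset.Ioc ((n : ℕ) : ℤ) ((n ⊔ N : ℕ) : ℤ), f k‖ := by
        rw [hdecomp]; exact norm_sub_le _ _
    _ ≤ ‖partialSum e x (m ⊔ M, n ⊔ N)‖
        + ‖∑ k ∈ Finset.Ioc (-(((m ⊔ M : ℕ) : ℤ)) - 1) (-(m : ℤ) - 1), f k‖
        + ‖∑ k ∈ Finset.Ioc ((n : ℕ) : ℤ) ((n ⊔ N : ℕ) : ℤ), f k‖ := by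
        have := norm_sub_le (partialSum e x (m ⊔ M, n ⊔ N))
          (∑ k ∈ Finset.Ioc (-(((m ⊔ M : ℕ) : ℤ)) - 1) (-(m : ℤ) - 1), f k)
        linarith
    _ ≤ ‖z‖ + 1 + K + K := by linarith

end XhatAux


open XhatAux Filter in
theorem Xhat_is_Banach_sequence_space_and_X_closed
    {X : Type*} [NormedAddCommGroup X] [NormedSpace ℝ X] [CompleteSpace X]
    (coe : X →ₗ[ℝ] (ℤ → ℝ)) (hinj : Function.Injective coe)
    (hcont : ∀ k : ℤ, Continuous fun x : X => coe x k)
    (e : ℤ → X) (he : ∀ n k : ℤ, coe (e n) k = if k = n then (1 : ℝ) else 0)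
    (hbasis : ∀ x : X,
      Filter.Tendsto (fun mn : ℕ × ℕ => partialSum e (coe x) mn) Filter.atTop (nhds x)) :
    -- `|||·|||` is a norm on `X̂`
    ((∀ x ∈ Xhat e, ∀ y ∈ Xhat e, x + y ∈ Xhat e ∧
        tnorm e (x + y) ≤ tnorm e x + tnorm e y) ∧
     (∀ (c : ℝ), ∀ x ∈ Xhat e, c • x ∈ Xhat e ∧ tnorm e (c • x) = |c| * tnorm e x) ∧
     (∀ x ∈ Xhat e, 0 ≤ tnorm e x) ∧
     (∀ x ∈ Xhat e, tnorm e x = 0 → x = 0)) ∧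
    -- `X̂` is complete for `|||·|||`
    (∀ u : ℕ → (ℤ → ℝ), (∀ i, u i ∈ Xhat e) →
      (∀ ε : ℝ, 0 < ε → ∃ N : ℕ, ∀ i j : ℕ, N ≤ i → N ≤ j → tnorm e (u i - u j) < ε) →
      ∃ y ∈ Xhat e, Filter.Tendsto (fun i => tnorm e (u i - y)) Filter.atTop (nhds 0)) ∧
    -- the coordinate functionals on `X̂` are continuous
    (∀ k : ℤ, ∃ C : ℝ, 0 < C ∧ ∀ x ∈ Xhat e, |x k| ≤ C * tnorm e x) ∧
    -- `X` is a closed subspace of `X̂`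
    ((∀ z : X, coe z ∈ Xhat e) ∧
     (∀ (u : ℕ → X), ∀ y ∈ Xhat e,
        Filter.Tendsto (fun i => tnorm e (coe (u i) - y)) Filter.atTop (nhds 0) →
        ∃ z : X, coe z = y)) := by
  have hek : ∀ k : ℤ, e k ≠ 0 := by
    intro k hk
    have h1 : coe (e k) k = 1 := by rw [he]; simp
    rw [hk, map_zero] at h1
    simp at h1
  have hcoord : ∀ k : ℤ, ∃ C : ℝ, 0 < C ∧ ∀ x ∈ Xhat e, |x k| ≤ C * tnorm e x :=
    fun k => coord k (hek k)
  have hmemX : ∀ z : X, coe z ∈ Xhat e := fun z => mem_of_tendsto e (coe z) z (hbasis z)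
  have hnle : ∀ z : X, ‖z‖ ≤ tnorm e (coe z) := fun z =>
    le_of_tendsto (hbasis z).norm (Filter.Eventually.of_forall fun mn => norm_ps_le (hmemX z) mn)
  refine ⟨⟨fun x hx y hy => add_mem_tnorm hx hy,
          fun c x hx => ⟨smul_mem c hx, tnorm_smul c x⟩,
          fun x hx => tnorm_nonneg' hx,
          ?_⟩, ?_, hcoord, hmemX, ?_⟩
  · -- tnorm = 0 → x = 0
    intro x hx h0
    funext k
    obtain ⟨C, hC, hle⟩ := hcoord k
    have h1 := hle x hx
    rw [h0, mul_zero] at h1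
    simpa using abs_nonpos_iff.mp h1
  · -- completeness
    intro u hu hc
    choose C hCpos hCle using hcoord
    have hdiff : ∀ i j, u i - u j ∈ Xhat e := fun i j => sub_mem (hu i) (hu j)
    have hcc : ∀ k : ℤ, ∃ L : ℝ, Tendsto (fun i => u i k) atTop (nhds L) := by
      intro k
      apply cauchySeq_tendsto_of_complete
      rw [Metric.cauchySeq_iff]
      intro ε hε
      obtain ⟨N, hN⟩ := hc (ε / C k) (div_pos hε (hCpos k))
      refine ⟨N, fun i hi j hj => ?_⟩
      have h1 := hCle k _ (hdiff i j)
      have h2 := hN i j hi hj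
      rw [Real.dist_eq]
      have h3 : u i k - u j k = (u i - u j) k := rfl
      calc |u i k - u j k| = |(u i - u j) k| := by rw [h3]
        _ ≤ C k * tnorm e (u i - u j) := h1
        _ < C k * (ε / C k) := mul_lt_mul_of_pos_left h2 (hCpos k)
        _ = ε := by rw [mul_comm, div_mul_cancel₀ _ (hCpos k).ne']
    choose y hy using hcc
    have hpsy : ∀ mn : ℕ × ℕ, Tendsto (fun j => partialSum e (u j) mn) atTop
        (nhds (partialSum e y mn)) := by
      intro mn
      simp only [partialSum]
      exact tendsto_finset_sum _ fun k _ => (hy k).smul_const (e k)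
    have key : ∀ ε : ℝ, 0 < ε → ∃ N : ℕ, ∀ i, N ≤ i → ∀ mn,
        ‖partialSum e (u i - y) mn‖ ≤ ε := by
      intro ε hε
      obtain ⟨N, hN⟩ := hc ε hε
      refine ⟨N, fun i hi mn => ?_⟩
      rw [partialSum_sub]
      have h1 : Tendsto (fun j => ‖partialSum e (u i) mn - partialSum e (u j) mn‖) atTop
          (nhds ‖partialSum e (u i) mn - partialSum e y mn‖) :=
        (tendsto_const_nhds.sub (hpsy mn)).norm
      refine le_of_tendsto h1 ?_
      filter_upwards [eventually_ge_atTop N] with j hj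
      rw [← partialSum_sub]
      exact (norm_ps_le (hdiff i j) mn).trans (hN i j hi hj).le
    have hyX : y ∈ Xhat e := by
      obtain ⟨N, hN⟩ := key 1 one_pos
      have h1 : u N - y ∈ Xhat e := mem_of_forall_le fun mn => hN N le_rfl mn
      have h2 := sub_mem (hu N) h1
      rwa [sub_sub_cancel] at h2
    refine ⟨y, hyX, ?_⟩
    rw [Metric.tendsto_atTop]
    intro ε hε
    obtain ⟨N, hN⟩ := key (ε / 2) (by positivity)
    refine ⟨N, fun i hi => ?_⟩
    have hm : u i - y ∈ Xhat e := sub_mem (hu i) hyX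
    have h2 : tnorm e (u i - y) ≤ ε / 2 := ciSup_le fun mn => hN i hi mn
    rw [Real.dist_eq, sub_zero, abs_of_nonneg (tnorm_nonneg' hm)]
    linarith
  · -- X closed in Xhat
    intro u y hy hlim
    have hmemd : ∀ i, coe (u i) - y ∈ Xhat e := fun i => sub_mem (hmemX (u i)) hy
    have hnn : ∀ i, 0 ≤ tnorm e (coe (u i) - y) := fun i => tnorm_nonneg' (hmemd i)
    have hcau : CauchySeq u := by
      rw [Metric.cauchySeq_iff]
      intro ε hε
      obtain ⟨N, hN⟩ := Metric.tendsto_atTop.1 hlim (ε / 2) (by positivity)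
      refine ⟨N, fun i hi j hj => ?_⟩
      have hti : tnorm e (coe (u i) - y) < ε / 2 := by
        have h := hN i hi; rwa [Real.dist_eq, sub_zero, abs_of_nonneg (hnn i)] at h
      have htj : tnorm e (coe (u j) - y) < ε / 2 := by
        have h := hN j hj; rwa [Real.dist_eq, sub_zero, abs_of_nonneg (hnn j)] at h
      have tri : tnorm e (coe (u i) - coe (u j)) ≤
          tnorm e (coe (u i) - y) + tnorm e (y - coe (u j)) := by
        have h := (add_mem_tnorm (hmemd i) (sub_mem hy (hmemX (u j)))).2
        rwa [sub_add_sub_cancel] at h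
      have hcomm : tnorm e (y - coe (u j)) = tnorm e (coe (u j) - y) := tnorm_sub_comm _ _
      have hle : ‖u i - u j‖ ≤ tnorm e (coe (u i) - coe (u j)) := by
        have h := hnle (u i - u j)
        rwa [map_sub] at h
      rw [dist_eq_norm]
      calc ‖u i - u j‖ ≤ tnorm e (coe (u i) - coe (u j)) := hle
        _ ≤ tnorm e (coe (u i) - y) + tnorm e (y - coe (u j)) := tri
        _ < ε := by rw [hcomm]; linarith
    obtain ⟨z, hz⟩ := cauchySeq_tendsto_of_complete hcau
    refine ⟨z, funext fun k => ?_⟩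
    obtain ⟨Ck, hCk, hCkle⟩ := hcoord k
    have h1 : Tendsto (fun i => coe (u i) k) atTop (nhds (coe z k)) :=
      ((hcont k).tendsto z).comp hz
    have h2 : Tendsto (fun i => coe (u i) k) atTop (nhds (y k)) := by
      rw [tendsto_iff_dist_tendsto_zero]
      refine squeeze_zero (fun i => dist_nonneg) (fun i => ?_) (by simpa using hlim.const_mul Ck)
      rw [Real.dist_eq]
      have h3 : coe (u i) k - y k = (coe (u i) - y) k := rfl
      rw [h3]
      exact hCkle _ (hmemd i)
    exact tendsto_nhds_unique h1 h2
end

section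
/- Let X be a Banach sequence space over ℤ with basis (e_n), and let B_w be a bilateral weighted backward shift, B_w(x_n)_{n∈ℤ} = (w_{n+1} x_{n+1})_{n∈ℤ}, with nonzero weights w_n. If B_w is a bounded operator on X, then B_w is a bounded operator on X̂ (with the norm |||·|||), and its operator norm on X̂ equals its operator norm on (X, |||·|||). -/
/-- The bilateral weighted backward shift acting on scalar sequences over `ℤ`. -/
def wShift (w : ℤ → ℝ) (x : ℤ → ℝ) : ℤ → ℝ := fun n => w (n + 1) * x (n + 1)

section aux
variable {X : Type*} [NormedAddCommGroup X] [NormedSpace ℝ X]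

lemma coe_partialSum (coe : X →ₗ[ℝ] (ℤ → ℝ)) (e : ℤ → X)
    (he : ∀ n k : ℤ, coe (e n) k = if k = n then (1 : ℝ) else 0)
    (x : ℤ → ℝ) (mn : ℕ × ℕ) (k : ℤ) :
    coe (partialSum e x mn) k =
      if k ∈ Finset.Icc (-(mn.1 : ℤ)) (mn.2 : ℤ) then x k else 0 := by
  unfold partialSum
  rw [map_sum]
  simp only [map_smul, Finset.sum_apply, Pi.smul_apply, he, smul_eq_mul,
    mul_ite, mul_one, mul_zero]
  exact Finset.sum_ite_eq (Finset.Icc (-(mn.1 : ℤ)) (mn.2 : ℤ)) k x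

lemma bddAbove_coe (coe : X →ₗ[ℝ] (ℤ → ℝ)) (e : ℤ → X)
    (hbasis : ∀ x : X,
      Filter.Tendsto (fun mn : ℕ × ℕ => partialSum e (coe x) mn) Filter.atTop (nhds x))
    (z : X) :
    BddAbove (Set.range fun mn : ℕ × ℕ => ‖partialSum e (coe z) mn‖) := by
  have h1 : Filter.Tendsto (fun mn : ℕ × ℕ => ‖partialSum e (coe z) mn‖)
      Filter.atTop (nhds ‖z‖) := (hbasis z).norm
  obtain ⟨N, hN⟩ := Filter.eventually_atTop.1
    (h1.eventually (eventually_le_nhds (lt_add_one ‖z‖)))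
  set y := coe z with hy
  refine ⟨‖z‖ + 1 + ∑ k ∈ Finset.Icc (-(N.1 : ℤ)) (N.2 : ℤ), ‖y k • e k‖, ?_⟩
  rintro _ ⟨⟨m, n⟩, rfl⟩
  have hsub : Finset.Icc (-(m : ℤ)) (n : ℤ) ⊆
      Finset.Icc (-((max m N.1 : ℕ) : ℤ)) ((max n N.2 : ℕ) : ℤ) := by
    apply Finset.Icc_subset_Icc <;> push_cast <;> omega
  have hdec : partialSum e y (m, n) =
      partialSum e y (max m N.1, max n N.2) -
        ∑ k ∈ Finset.Icc (-((max m N.1 : ℕ) : ℤ)) ((max n N.2 : ℕ) : ℤ) \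
            Finset.Icc (-(m : ℤ)) (n : ℤ), y k • e k := by
    unfold partialSum
    rw [Finset.sum_sdiff_eq_sub hsub]
    abel
  have hbig : ‖partialSum e y (max m N.1, max n N.2)‖ ≤ ‖z‖ + 1 := by
    exact hN _ ⟨le_max_right _ _, le_max_right _ _⟩
  have hrest : ‖∑ k ∈ Finset.Icc (-((max m N.1 : ℕ) : ℤ)) ((max n N.2 : ℕ) : ℤ) \
      Finset.Icc (-(m : ℤ)) (n : ℤ), y k • e k‖ ≤
      ∑ k ∈ Finset.Icc (-(N.1 : ℤ)) (N.2 : ℤ), ‖y k • e k‖ := by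
    refine (norm_sum_le _ _).trans ?_
    apply Finset.sum_le_sum_of_subset_of_nonneg
    · intro k hk
      simp only [Finset.mem_sdiff, Finset.mem_Icc, not_and, not_le] at hk
      simp only [Finset.mem_Icc]
      push_cast at hk ⊢
      omega
    · intro k _ _; exact norm_nonneg _
  calc ‖partialSum e y (m, n)‖ ≤
      ‖partialSum e y (max m N.1, max n N.2)‖ + ‖∑ k ∈ _ \ _, y k • e k‖ := by
        rw [hdec]; exact norm_sub_le _ _
    _ ≤ ‖z‖ + 1 + ∑ k ∈ Finset.Icc (-(N.1 : ℤ)) (N.2 : ℤ), ‖y k • e k‖ :=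
        add_le_add hbig hrest

end aux

theorem wShift_bounded_on_Xhat_same_norm
    {X : Type*} [NormedAddCommGroup X] [NormedSpace ℝ X] [CompleteSpace X]
    (coe : X →ₗ[ℝ] (ℤ → ℝ)) (hinj : Function.Injective coe)
    (hcont : ∀ k : ℤ, Continuous fun x : X => coe x k)
    (e : ℤ → X) (he : ∀ n k : ℤ, coe (e n) k = if k = n then (1 : ℝ) else 0)
    (hbasis : ∀ x : X,
      Filter.Tendsto (fun mn : ℕ × ℕ => partialSum e (coe x) mn) Filter.atTop (nhds x))
    (w : ℤ → ℝ) (hw : ∀ n, w n ≠ 0)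
    (T : X →L[ℝ] X) (hT : ∀ z : X, coe (T z) = wShift w (coe z)) :
    (∀ x ∈ Xhat e, wShift w x ∈ Xhat e) ∧
    sInf {C : ℝ | 0 ≤ C ∧ ∀ x ∈ Xhat e, tnorm e (wShift w x) ≤ C * tnorm e x} =
      sInf {C : ℝ | 0 ≤ C ∧ ∀ z : X, tnorm e (wShift w (coe z)) ≤ C * tnorm e (coe z)} := by
  classical
  have hmemX : ∀ z : X, coe z ∈ Xhat e := fun z => bddAbove_coe coe e hbasis z
  have htn : ∀ x : ℤ → ℝ, tnorm e x = ⨆ mn : ℕ × ℕ, ‖partialSum e x mn‖ := fun _ => rfl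
  have hle_tnorm : ∀ x ∈ Xhat e, ∀ mn : ℕ × ℕ, ‖partialSum e x mn‖ ≤ tnorm e x := by
    intro x hx mn
    exact le_ciSup hx mn
  -- The key estimate: a bound on `coe`-sequences transfers to all of Xhat.
  have hkey : ∀ C : ℝ, 0 ≤ C →
      (∀ z : X, tnorm e (wShift w (coe z)) ≤ C * tnorm e (coe z)) →
      ∀ x ∈ Xhat e, ∀ mn : ℕ × ℕ, ‖partialSum e (wShift w x) mn‖ ≤ C * tnorm e x := by
    intro C hC hCz x hx ⟨m, n⟩
    set P : X := partialSum e x (m, n + 1) with hP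
    have hcoeP : ∀ k : ℤ, coe P k =
        if k ∈ Finset.Icc (-(m : ℤ)) ((n : ℤ) + 1) then x k else 0 := by
      intro k
      have := coe_partialSum coe e he x (m, n + 1) k
      simpa using this
    -- step 1 : the partial sum of the shifted sequence comes from P
    have hstep1 : partialSum e (wShift w x) (m, n) = partialSum e (wShift w (coe P)) (m, n) := by
      unfold partialSum
      refine Finset.sum_congr rfl fun k hk => ?_
      simp only [Finset.mem_Icc] at hk
      have : coe P (k + 1) = x (k + 1) := by
        rw [hcoeP]
        rw [if_pos]
        simp only [Finset.mem_Icc]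
        omega
      simp [wShift, this]
    -- step 2 : bound by tnorm of wShift w (coe P)
    have hbdd : BddAbove (Set.range fun mn : ℕ × ℕ => ‖partialSum e (wShift w (coe P)) mn‖) := by
      rw [← hT P]
      exact hmemX (T P)
    have hstep2 : ‖partialSum e (wShift w (coe P)) (m, n)‖ ≤ tnorm e (wShift w (coe P)) :=
      le_ciSup hbdd (m, n)
    -- step 3 : tnorm e (coe P) ≤ tnorm e x
    have hstep3 : tnorm e (coe P) ≤ tnorm e x := by
      rw [htn (coe P)]
      refine ciSup_le fun ⟨a, b⟩ => ?_
      have heq : partialSum e (coe P) (a, b) = partialSum e x (min a m, min b (n + 1)) := by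
        unfold partialSum
        have : ∀ k ∈ Finset.Icc (-(a : ℤ)) (b : ℤ), coe P k • e k =
            if k ∈ Finset.Icc (-(m : ℤ)) ((n : ℤ) + 1) then x k • e k else 0 := by
          intro k _
          rw [hcoeP, ite_smul, zero_smul]
        rw [Finset.sum_congr rfl this, Finset.sum_ite_mem]
        have hicc : Finset.Icc (-(a : ℤ)) (b : ℤ) ∩ Finset.Icc (-(m : ℤ)) ((n : ℤ) + 1) =
            Finset.Icc (-((min a m : ℕ) : ℤ)) ((min b (n + 1) : ℕ) : ℤ) := by
          ext k
          simp only [Finset.mem_inter, Finset.mem_Icc]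
          push_cast
          omega
        rw [hicc]
      rw [heq]
      exact hle_tnorm x hx _
    calc ‖partialSum e (wShift w x) (m, n)‖
        = ‖partialSum e (wShift w (coe P)) (m, n)‖ := by rw [hstep1]
      _ ≤ tnorm e (wShift w (coe P)) := hstep2
      _ ≤ C * tnorm e (coe P) := hCz P
      _ ≤ C * tnorm e x := mul_le_mul_of_nonneg_left hstep3 hC
  -- Banach–Steinhaus: partial-sum operators are uniformly bounded
  set g : ℕ × ℕ → X →L[ℝ] X := fun mn =>
    ∑ k ∈ Finset.Icc (-(mn.1 : ℤ)) (mn.2 : ℤ),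
      ((⟨LinearMap.proj k ∘ₗ (coe : X →ₗ[ℝ] (ℤ → ℝ)), by exact hcont k⟩ : X →L[ℝ] ℝ).smulRight (e k))
    with hg
  have hgapp : ∀ (mn : ℕ × ℕ) (z : X), g mn z = partialSum e (coe z) mn := by
    intro mn z
    simp [hg, partialSum, ContinuousLinearMap.sum_apply]
    rfl
  obtain ⟨M, hM⟩ : ∃ M, ∀ mn : ℕ × ℕ, ‖g mn‖ ≤ M := by
    apply banach_steinhaus
    intro z
    obtain ⟨C, hC⟩ := hmemX z
    refine ⟨C, fun mn => ?_⟩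
    rw [hgapp]
    exact hC ⟨mn, rfl⟩
  set M' : ℝ := max M 0 with hM'
  have hM'0 : 0 ≤ M' := le_max_right _ _
  have htn_le : ∀ z : X, tnorm e (coe z) ≤ M' * ‖z‖ := by
    intro z
    rw [htn]
    refine ciSup_le fun mn => ?_
    rw [← hgapp]
    calc ‖g mn z‖ ≤ ‖g mn‖ * ‖z‖ := (g mn).le_opNorm z
      _ ≤ M' * ‖z‖ := by
          apply mul_le_mul_of_nonneg_right _ (norm_nonneg z)
          exact le_trans (hM mn) (le_max_left _ _)
  have hnorm_le : ∀ z : X, ‖z‖ ≤ tnorm e (coe z) := by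
    intro z
    refine le_of_tendsto (hbasis z).norm ?_
    filter_upwards with mn
    exact hle_tnorm _ (hmemX z) mn
  -- a concrete element of the right-hand set
  set C₀ : ℝ := M' * ‖T‖ with hC₀
  have hC₀0 : 0 ≤ C₀ := mul_nonneg hM'0 (norm_nonneg T)
  have hC₀mem : ∀ z : X, tnorm e (wShift w (coe z)) ≤ C₀ * tnorm e (coe z) := by
    intro z
    rw [← hT z]
    calc tnorm e (coe (T z)) ≤ M' * ‖T z‖ := htn_le (T z)
      _ ≤ M' * (‖T‖ * ‖z‖) := mul_le_mul_of_nonneg_left (T.le_opNorm z) hM'0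
      _ = C₀ * ‖z‖ := by ring
      _ ≤ C₀ * tnorm e (coe z) := mul_le_mul_of_nonneg_left (hnorm_le z) hC₀0
  have hXhat : ∀ x ∈ Xhat e, wShift w x ∈ Xhat e := by
    intro x hx
    refine ⟨C₀ * tnorm e x, ?_⟩
    rintro _ ⟨mn, rfl⟩
    exact hkey C₀ hC₀0 hC₀mem x hx mn
  refine ⟨hXhat, ?_⟩
  congr 1
  ext C
  simp only [Set.mem_setOf_eq]
  constructor
  · rintro ⟨h0, h⟩
    exact ⟨h0, fun z => h (coe z) (hmemX z)⟩
  · rintro ⟨h0, h⟩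
    refine ⟨h0, fun x hx => ?_⟩
    rw [htn]
    exact ciSup_le fun mn => hkey C h0 h x hx mn
end

section
/- Let Y be a Banach space, X a closed subspace of Y, and T a bounded operator on Y. Let 𝒜 = ∪_{δ∈D} ∩_{μ∈M} 𝒜_{δ,μ} be an upper Furstenberg family. If T is 𝒜-hypercyclic for X (there is y' ∈ Y such that for every open U ⊆ Y with U ∩ X ≠ ∅, the set {n : T^n y' ∈ U} belongs to 𝒜), then for every open V ⊆ Y with V ∩ X ≠ ∅ there exists δ ∈ D such that for every open U ⊆ Y with U ∩ X ≠ ∅ there exists y ∈ U with {n ≥ 0 : T^n y ∈ V} ∈ 𝒜_δ, where 𝒜_δ = ∩_{μ∈M} 𝒜_{δ,μ}. -/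
theorem Ahypercyclic_for_subspace_Birkhoff_necessity
    {Y : Type*} [NormedAddCommGroup Y] [NormedSpace ℝ Y] [CompleteSpace Y]
    (X : Subspace ℝ Y) (hX : IsClosed (X : Set Y))
    (T : Y →L[ℝ] Y)
    {D M : Type*} [Countable M]
    (𝓐 : D → M → Set (Set ℕ))
    -- 𝒜 = ∪_δ ∩_μ 𝒜_{δ,μ} is a Furstenberg family not containing ∅
    (hup : ∀ A B : Set ℕ, (∃ δ, ∀ μ, A ∈ 𝓐 δ μ) → A ⊆ B → (∃ δ, ∀ μ, B ∈ 𝓐 δ μ))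
    (hempty : ¬ ∃ δ, ∀ μ, (∅ : Set ℕ) ∈ 𝓐 δ μ)
    -- (i)
    (hi : ∀ (δ : D) (μ : M), ∀ A ∈ 𝓐 δ μ, ∃ F : Finset ℕ,
      ∀ B : Set ℕ, A ∩ (F : Set ℕ) ⊆ B → B ∈ 𝓐 δ μ)
    -- (ii)
    (hii : ∀ A : Set ℕ, (∃ δ, ∀ μ, A ∈ 𝓐 δ μ) →
      ∃ δ, ∀ n : ℕ, ∀ μ, {k : ℕ | k + n ∈ A} ∈ 𝓐 δ μ)
    -- T is 𝒜-hypercyclic for X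
    (y' : Y)
    (hy' : ∀ U : Set Y, IsOpen U → (U ∩ X).Nonempty →
      ∃ δ, ∀ μ, {n : ℕ | (T ^ n) y' ∈ U} ∈ 𝓐 δ μ) :
    ∀ V : Set Y, IsOpen V → (V ∩ X).Nonempty →
      ∃ δ : D, ∀ U : Set Y, IsOpen U → (U ∩ X).Nonempty →
        ∃ y ∈ U, ∀ μ : M, {n : ℕ | (T ^ n) y ∈ V} ∈ 𝓐 δ μ := by
  intro V hV hVX
  obtain ⟨δ₀, hδ₀⟩ := hy' V hV hVX
  obtain ⟨δ, hδ⟩ := hii {n : ℕ | (T ^ n) y' ∈ V} ⟨δ₀, hδ₀⟩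
  refine ⟨δ, fun U hU hUX => ?_⟩
  obtain ⟨δ₁, hδ₁⟩ := hy' U hU hUX
  have hne : {n : ℕ | (T ^ n) y' ∈ U}.Nonempty := by
    by_contra h
    rw [Set.not_nonempty_iff_eq_empty] at h
    exact hempty ⟨δ₁, h ▸ hδ₁⟩
  obtain ⟨n₀, hn₀⟩ := hne
  refine ⟨(T ^ n₀) y', hn₀, fun μ => ?_⟩
  have : {n : ℕ | (T ^ n) ((T ^ n₀) y') ∈ V} = {k : ℕ | k + n₀ ∈ {n : ℕ | (T ^ n) y' ∈ V}} := by
    ext k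
    have : (T ^ k) ((T ^ n₀) y') = (T ^ (k + n₀)) y' := by
      rw [pow_add]; rfl
    simp only [Set.mem_setOf_eq, this]
  rw [this]
  exact hδ n₀ μ
end

section
/- Let T be a bounded operator on a separable Banach space Y, and X a closed separable subspace of Y invariant under T. Let 𝒜 be an upper Furstenberg family. Suppose: for all x₂ ∈ X, ε₂ > 0 there exist x₂' ∈ X, η₂ > 0 such that for all x₁ ∈ X, ε₁ > 0 there exist x₁' ∈ X, η₁ > 0 so that for all y ∈ Y and finite F ⊆ ℕ, if ‖x₁' − y‖ < η₁ and ‖x₂' − T^n y‖ < η₂ for all n ∈ F, then there exists x ∈ X with ‖x₁ − x‖ < ε₁ and ‖x₂ − T^n x‖ < ε₂ for all n ∈ F. Then T : Y → Y is 𝒜-hypercyclic for X if and only if the restriction T : X → X is 𝒜-hypercyclic. -/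
open Metric Filter Topology Function

theorem Ahypercyclic_for_X_iff_Ahypercyclic_in_X
    {Y : Type*} [NormedAddCommGroup Y] [NormedSpace ℝ Y] [CompleteSpace Y]
    [TopologicalSpace.SeparableSpace Y]
    (X : Subspace ℝ Y) (hX : IsClosed (X : Set Y))
    [TopologicalSpace.SeparableSpace X]
    (T : Y →L[ℝ] Y) (hinv : ∀ x ∈ X, T x ∈ X)
    {D M : Type*} [Countable M]
    (𝓐 : D → M → Set (Set ℕ))
    -- 𝒜 = ∪_δ ∩_μ 𝒜_{δ,μ} is an upper Furstenberg family
    (hup : ∀ A B : Set ℕ, (∃ δ, ∀ μ, A ∈ 𝓐 δ μ) → A ⊆ B → (∃ δ, ∀ μ, B ∈ 𝓐 δ μ))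
    (hempty : ¬ ∃ δ, ∀ μ, (∅ : Set ℕ) ∈ 𝓐 δ μ)
    (hi : ∀ (δ : D) (μ : M), ∀ A ∈ 𝓐 δ μ, ∃ F : Finset ℕ,
      ∀ B : Set ℕ, A ∩ (F : Set ℕ) ⊆ B → B ∈ 𝓐 δ μ)
    (hii : ∀ A : Set ℕ, (∃ δ, ∀ μ, A ∈ 𝓐 δ μ) →
      ∃ δ, ∀ n : ℕ, ∀ μ, {k : ℕ | k + n ∈ A} ∈ 𝓐 δ μ)
    -- the approximation hypothesis
    (happrox : ∀ x₂ ∈ X, ∀ ε₂ : ℝ, 0 < ε₂ → ∃ x₂' ∈ X, ∃ η₂ : ℝ, 0 < η₂ ∧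
      ∀ x₁ ∈ X, ∀ ε₁ : ℝ, 0 < ε₁ → ∃ x₁' ∈ X, ∃ η₁ : ℝ, 0 < η₁ ∧
        ∀ y : Y, ∀ F : Finset ℕ,
          (‖x₁' - y‖ < η₁ ∧ ∀ n ∈ F, ‖x₂' - (T ^ n) y‖ < η₂) →
          ∃ x ∈ X, ‖x₁ - x‖ < ε₁ ∧ ∀ n ∈ F, ‖x₂ - (T ^ n) x‖ < ε₂) :
    -- T is 𝒜-hypercyclic for X iff T restricted to X is 𝒜-hypercyclic
    ((∃ y : Y, ∀ U : Set Y, IsOpen U → (U ∩ X).Nonempty →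
        ∃ δ, ∀ μ, {n : ℕ | (T ^ n) y ∈ U} ∈ 𝓐 δ μ) ↔
      (∃ x ∈ X, ∀ U : Set Y, IsOpen U → (U ∩ X).Nonempty →
        ∃ δ, ∀ μ, {n : ℕ | (T ^ n) x ∈ U} ∈ 𝓐 δ μ)) := by
  constructor
  · rintro ⟨y, hy⟩
    classical
    -- M is nonempty
    obtain ⟨δ₀, -⟩ := hy Set.univ isOpen_univ ⟨0, Set.mem_univ 0, X.zero_mem⟩
    have hM : Nonempty M := by
      by_contra h
      rw [not_nonempty_iff] at h
      exact hempty ⟨δ₀, fun μ => h.elim μ⟩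
    obtain ⟨e, he⟩ := exists_surjective_nat (ℕ × ℕ × M)
    -- dense sequence in X
    have hXne : Nonempty X := ⟨0⟩
    obtain ⟨u, hu⟩ := TopologicalSpace.exists_dense_seq X
    set z : ℕ → Y := fun j => (u j : Y) with hzdef
    have hzX : ∀ j, z j ∈ X := fun j => (u j).2
    have hzdense : ∀ p ∈ X, ∀ r : ℝ, 0 < r → ∃ j, dist p (z j) < r := by
      intro p hp r hr
      obtain ⟨j, hj⟩ := Metric.denseRange_iff.mp hu ⟨p, hp⟩ r hr
      exact ⟨j, by simpa [Subtype.dist_eq] using hj⟩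
    set rad : ℕ → ℝ := fun m => 1 / ((m : ℝ) + 1) with hraddef
    have hradpos : ∀ m, 0 < rad m := fun m => by positivity
    -- per-target data from the approximation hypothesis
    have H : ∀ j m : ℕ, ∃ w ∈ X, ∃ ηv : ℝ, 0 < ηv ∧
        ∀ x₁ ∈ X, ∀ ε₁ : ℝ, 0 < ε₁ → ∃ x₁' ∈ X, ∃ η₁ : ℝ, 0 < η₁ ∧
          ∀ y' : Y, ∀ F : Finset ℕ,
            (‖x₁' - y'‖ < η₁ ∧ ∀ n ∈ F, ‖w - (T ^ n) y'‖ < ηv) →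
            ∃ x ∈ X, ‖x₁ - x‖ < ε₁ ∧ ∀ n ∈ F, ‖z j - (T ^ n) x‖ < rad m / 2 :=
      fun j m => happrox (z j) (hzX j) (rad m / 2) (half_pos (hradpos m))
    choose W hWX η hηpos key using H
    set A : ℕ → ℕ → Set ℕ := fun j m => {n | (T ^ n) y ∈ ball (W j m) (η j m)} with hAdef
    have hA : ∀ j m, ∃ δ, ∀ μ, A j m ∈ 𝓐 δ μ := fun j m =>
      hy (ball (W j m) (η j m)) isOpen_ball ⟨W j m, mem_ball_self (hηpos j m), hWX j m⟩
    choose δδ hδ using fun j m => hii (A j m) (hA j m)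
    -- the invariant
    set Inv : Y → Finset (ℕ × ℕ × ℕ) → Prop := fun x C => x ∈ X ∧
      ∀ c ∈ C, ‖z c.2.1 - (T ^ c.1) x‖ < rad c.2.2 / 2 with hInvdef
    -- the one-step construction
    have step : ∀ (j m : ℕ) (μ : M) (x : Y) (C : Finset (ℕ × ℕ × ℕ)), Inv x C →
        ∀ ε : ℝ, 0 < ε → ∃ x' C', Inv x' C' ∧ C ⊆ C' ∧ ‖x - x'‖ < ε ∧
          ∃ G : Finset ℕ, (∀ n ∈ G, (n, j, m) ∈ C') ∧
            ∀ B : Set ℕ, ↑G ⊆ B → B ∈ 𝓐 (δδ j m) μ := by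
      intro j m μ x C hInvC ε hε
      obtain ⟨hxX, hC⟩ := hInvC
      -- choose a small perturbation bound ε'
      set val : ℕ × ℕ × ℕ → ℝ := fun c =>
        (rad c.2.2 / 2 - ‖z c.2.1 - (T ^ c.1) x‖) / (2 * (1 + ‖(T ^ c.1 : Y →L[ℝ] Y)‖))
        with hvaldef
      set t : Finset ℝ := insert ε (C.image val) with htdef
      have htne : t.Nonempty := ⟨ε, Finset.mem_insert_self _ _⟩
      set ε' : ℝ := t.min' htne with hε'def
      have hε'pos : 0 < ε' := by
        have hmem : ε' ∈ t := t.min'_mem htne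
        rw [htdef, Finset.mem_insert] at hmem
        rcases hmem with h | h
        · rw [h]; exact hε
        · obtain ⟨c, hc, hval⟩ := Finset.mem_image.mp h
          rw [← hval]
          have hgap : 0 < rad c.2.2 / 2 - ‖z c.2.1 - (T ^ c.1) x‖ := by
            linarith [hC c hc]
          have hden : (0:ℝ) < 2 * (1 + ‖(T ^ c.1 : Y →L[ℝ] Y)‖) := by positivity
          exact div_pos hgap hden
      have hε'ε : ε' ≤ ε := Finset.min'_le t ε (Finset.mem_insert_self _ _)
      have hε'c : ∀ c ∈ C, ε' ≤ val c := fun c hc =>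
        Finset.min'_le t _ (Finset.mem_insert_of_mem (Finset.mem_image_of_mem val hc))
      -- apply the inner approximation
      obtain ⟨x₁', hx₁'X, η₁, hη₁pos, hkey⟩ := key j m x hxX ε' hε'pos
      -- pick a time s where the orbit of y is close to x₁'
      have hA₀ : ∃ δ, ∀ μ', {n : ℕ | (T ^ n) y ∈ ball x₁' η₁} ∈ 𝓐 δ μ' :=
        hy (ball x₁' η₁) isOpen_ball ⟨x₁', mem_ball_self hη₁pos, hx₁'X⟩
      have hne : {n : ℕ | (T ^ n) y ∈ ball x₁' η₁}.Nonempty := by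
        by_contra h
        rw [Set.not_nonempty_iff_eq_empty] at h
        rw [h] at hA₀
        exact hempty hA₀
      obtain ⟨s, hs⟩ := hne
      -- finite set from the upper-family property
      obtain ⟨F, hF⟩ := hi (δδ j m) μ _ (hδ j m s μ)
      set G : Finset ℕ := F.filter (fun k => k + s ∈ A j m) with hGdef
      have hGA : ∀ n ∈ G, n + s ∈ A j m := fun n hn => (Finset.mem_filter.mp hn).2
      -- apply the key approximation with y' = T^s y
      have hcond1 : ‖x₁' - (T ^ s) y‖ < η₁ := by
        have := mem_ball.mp hs
        rwa [dist_eq_norm, norm_sub_rev] at this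
      have hcond2 : ∀ n ∈ G, ‖W j m - (T ^ n) ((T ^ s) y)‖ < η j m := by
        intro n hn
        have h1 : (T ^ n) ((T ^ s) y) = (T ^ (n + s)) y := by
          rw [pow_add, ContinuousLinearMap.mul_apply]
        rw [h1]
        have h2 := hGA n hn
        rw [hAdef] at h2
        have := mem_ball.mp h2
        rwa [dist_eq_norm, norm_sub_rev] at this
      obtain ⟨x', hx'X, hclose, hhits⟩ := hkey ((T ^ s) y) G ⟨hcond1, hcond2⟩
      refine ⟨x', C ∪ G.image (fun n => (n, j, m)), ⟨hx'X, ?_⟩,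
        Finset.subset_union_left, lt_of_lt_of_le hclose hε'ε, G, ?_, ?_⟩
      · intro c hc
        rcases Finset.mem_union.mp hc with hc' | hc'
        · -- old commitment is preserved
          have hold := hC c hc'
          have hval := hε'c c hc'
          rw [hvaldef] at hval
          set K : ℝ := ‖(T ^ c.1 : Y →L[ℝ] Y)‖ with hKdef
          have hK : (0:ℝ) ≤ K := norm_nonneg _
          have hdiff : ‖(T ^ c.1) x - (T ^ c.1) x'‖ ≤ K * ‖x - x'‖ := by
            rw [← map_sub]
            exact (T ^ c.1).le_opNorm _
          have h2 : ε' * (2 * (1 + K)) ≤ rad c.2.2 / 2 - ‖z c.2.1 - (T ^ c.1) x‖ := by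
            rw [le_div_iff₀ (by positivity : (0:ℝ) < 2 * (1 + K))] at hval
            exact hval
          have hKx : K * ‖x - x'‖ ≤ K * ε' :=
            mul_le_mul_of_nonneg_left hclose.le hK
          calc ‖z c.2.1 - (T ^ c.1) x'‖
              ≤ ‖z c.2.1 - (T ^ c.1) x‖ + ‖(T ^ c.1) x - (T ^ c.1) x'‖ :=
                norm_sub_le_norm_sub_add_norm_sub _ _ _
            _ < rad c.2.2 / 2 := by nlinarith
        · obtain ⟨n, hnG, rfl⟩ := Finset.mem_image.mp hc'
          exact hhits n hnG
      · intro n hn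
        exact Finset.mem_union_right _ (Finset.mem_image_of_mem _ hn)
      · intro B hB
        apply hF
        intro k hk
        obtain ⟨hk1, hk2⟩ := hk
        exact hB (Finset.mem_coe.mpr (Finset.mem_filter.mpr ⟨hk2, hk1⟩))
    -- build the sequence recursively
    have inv0 : Inv 0 ∅ := ⟨X.zero_mem, fun c hc => absurd hc (Finset.notMem_empty c)⟩
    have EX : ∀ (p : ℕ) (st : {q : Y × Finset (ℕ × ℕ × ℕ) // Inv q.1 q.2}),
        ∃ st' : {q : Y × Finset (ℕ × ℕ × ℕ) // Inv q.1 q.2},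
          st.1.2 ⊆ st'.1.2 ∧ ‖st.1.1 - st'.1.1‖ < (1/2 : ℝ)^p ∧
          ∃ G : Finset ℕ, (∀ n ∈ G, (n, (e p).1, (e p).2.1) ∈ st'.1.2) ∧
            ∀ B : Set ℕ, ↑G ⊆ B → B ∈ 𝓐 (δδ (e p).1 (e p).2.1) (e p).2.2 := by
      intro p st
      obtain ⟨x', C', hinv', hsub, hclose, G, hG1, hG2⟩ :=
        step (e p).1 (e p).2.1 (e p).2.2 st.1.1 st.1.2 st.2 ((1/2 : ℝ)^p) (by positivity)
      exact ⟨⟨(x', C'), hinv'⟩, hsub, hclose, G, hG1, hG2⟩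
    set χ : ℕ → {q : Y × Finset (ℕ × ℕ × ℕ) // Inv q.1 q.2} := fun p =>
      Nat.rec ⟨(0, ∅), inv0⟩ (fun p st => Classical.choose (EX p st)) p with hχdef
    have hprop : ∀ p, (χ p).1.2 ⊆ (χ (p+1)).1.2 ∧
        ‖(χ p).1.1 - (χ (p+1)).1.1‖ < (1/2 : ℝ)^p ∧
        ∃ G : Finset ℕ, (∀ n ∈ G, (n, (e p).1, (e p).2.1) ∈ (χ (p+1)).1.2) ∧
          ∀ B : Set ℕ, ↑G ⊆ B → B ∈ 𝓐 (δδ (e p).1 (e p).2.1) (e p).2.2 :=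
      fun p => Classical.choose_spec (EX p (χ p))
    set xs : ℕ → Y := fun p => (χ p).1.1 with hxsdef
    -- Cauchy and limit
    have hcauchy : CauchySeq xs := by
      apply cauchySeq_of_le_geometric (1/2 : ℝ) 1 (by norm_num)
      intro n
      rw [dist_eq_norm, one_mul]
      exact ((hprop n).2.1).le
    obtain ⟨xlim, hxlim⟩ := cauchySeq_tendsto_of_complete hcauchy
    have hxlimX : xlim ∈ (X : Set Y) :=
      hX.mem_of_tendsto hxlim (Eventually.of_forall fun p => (χ p).2.1)
    -- commitments are monotone
    have hmono : ∀ p q : ℕ, p ≤ q → (χ p).1.2 ⊆ (χ q).1.2 := by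
      intro p q hpq
      induction q, hpq using Nat.le_induction with
      | base => exact subset_rfl
      | succ q hpq ih => exact ih.trans (hprop q).1
    -- commitments persist to the limit
    have hpersist : ∀ p c, c ∈ (χ p).1.2 →
        ‖z c.2.1 - (T ^ c.1) xlim‖ ≤ rad c.2.2 / 2 := by
      intro p c hc
      have hbd : ∀ q, p ≤ q → ‖z c.2.1 - (T ^ c.1) (xs q)‖ ≤ rad c.2.2 / 2 :=
        fun q hq => ((χ q).2.2 c (hmono p q hq hc)).le
      have htd : Tendsto (fun q => ‖z c.2.1 - (T ^ c.1) (xs q)‖) atTop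
          (nhds ‖z c.2.1 - (T ^ c.1) xlim‖) :=
        (tendsto_const_nhds.sub (((T ^ c.1).continuous.tendsto xlim).comp hxlim)).norm
      exact le_of_tendsto htd (eventually_atTop.mpr ⟨p, hbd⟩)
    -- the main claim: xlim hits each ball with the right frequency
    have main : ∀ j m : ℕ, ∀ μ : M,
        {n : ℕ | (T ^ n) xlim ∈ ball (z j) (rad m)} ∈ 𝓐 (δδ j m) μ := by
      intro j m μ
      obtain ⟨p, hp⟩ := he (j, m, μ)
      obtain ⟨-, -, G, hG1, hG2⟩ := hprop p
      rw [hp] at hG1 hG2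
      apply hG2
      intro n hn
      have hc := hG1 n (Finset.mem_coe.mp hn)
      have hle := hpersist (p+1) (n, j, m) hc
      show (T ^ n) xlim ∈ ball (z j) (rad m)
      rw [mem_ball, dist_eq_norm, ← norm_sub_rev]
      exact lt_of_le_of_lt hle (by linarith [hradpos m])
    -- conclude
    refine ⟨xlim, hxlimX, ?_⟩
    rintro U hU ⟨p, hpU, hpX⟩
    obtain ⟨r, hr, hball⟩ := Metric.isOpen_iff.mp hU p hpU
    obtain ⟨j, hj⟩ := hzdense p hpX (r/4) (by linarith)
    obtain ⟨m, hm⟩ := exists_nat_one_div_lt (show (0:ℝ) < r/2 by linarith)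
    refine hup {n : ℕ | (T ^ n) xlim ∈ ball (z j) (rad m)} _
      ⟨δδ j m, fun μ => main j m μ⟩ ?_
    intro n hn
    apply hball
    have h1 : dist ((T ^ n) xlim) (z j) < rad m := mem_ball.mp hn
    have h2 : dist ((T ^ n) xlim) p ≤ dist ((T ^ n) xlim) (z j) + dist (z j) p :=
      dist_triangle _ _ _
    have h3 : dist (z j) p < r / 4 := by rwa [dist_comm] at hj
    have h4 : rad m < r / 2 := hm
    exact mem_ball.mpr (by linarith)
  · rintro ⟨x, -, hx⟩
    exact ⟨x, hx⟩
end

section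
/- (Birkhoff-type criterion for upper families) Let T be a bounded operator on a separable Banach space X and 𝒜 = ∪_{δ∈D} ∩_{μ∈M} 𝒜_{δ,μ} an upper Furstenberg family. If for every nonempty open V ⊆ X there is δ ∈ D such that for every nonempty open U ⊆ X and every μ ∈ M there is x ∈ U with {n ≥ 0 : T^n x ∈ V} ∈ 𝒜_{δ,μ}, then T is 𝒜-hypercyclic. -/
theorem Birkhoff_criterion_for_upper_families
    {X : Type*} [NormedAddCommGroup X] [NormedSpace ℝ X] [CompleteSpace X]
    [TopologicalSpace.SeparableSpace X]
    (T : X →L[ℝ] X)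
    {D M : Type*} [Countable M]
    (𝓐 : D → M → Set (Set ℕ))
    (hup : ∀ A B : Set ℕ, (∃ δ, ∀ μ, A ∈ 𝓐 δ μ) → A ⊆ B → (∃ δ, ∀ μ, B ∈ 𝓐 δ μ))
    (hempty : ¬ ∃ δ, ∀ μ, (∅ : Set ℕ) ∈ 𝓐 δ μ)
    (hi : ∀ (δ : D) (μ : M), ∀ A ∈ 𝓐 δ μ, ∃ F : Finset ℕ,
      ∀ B : Set ℕ, A ∩ (F : Set ℕ) ⊆ B → B ∈ 𝓐 δ μ)
    (hii : ∀ A : Set ℕ, (∃ δ, ∀ μ, A ∈ 𝓐 δ μ) →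
      ∃ δ, ∀ n : ℕ, ∀ μ, {k : ℕ | k + n ∈ A} ∈ 𝓐 δ μ)
    -- condition (B)
    (hB : ∀ V : Set X, IsOpen V → V.Nonempty →
      ∃ δ : D, ∀ U : Set X, IsOpen U → U.Nonempty → ∀ μ : M,
        ∃ x ∈ U, {n : ℕ | (T ^ n) x ∈ V} ∈ 𝓐 δ μ) :
    ∃ x : X, ∀ U : Set X, IsOpen U → U.Nonempty →
      ∃ δ, ∀ μ, {n : ℕ | (T ^ n) x ∈ U} ∈ 𝓐 δ μ := by
  classical
  haveI : SecondCountableTopology X :=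
    UniformSpace.secondCountable_of_separable X
  obtain ⟨B, hBc, -, hbasis⟩ := TopologicalSpace.exists_countable_basis X
  haveI : Countable {V : Set X // V ∈ B ∧ V.Nonempty} :=
    (hBc.mono (fun V h => h.1)).to_subtype
  have hδ : ∀ V : {V : Set X // V ∈ B ∧ V.Nonempty}, ∃ δ : D,
      ∀ U : Set X, IsOpen U → U.Nonempty → ∀ μ : M,
        ∃ x ∈ U, {n : ℕ | (T ^ n) x ∈ V.1} ∈ 𝓐 δ μ :=
    fun V => hB V.1 (hbasis.isOpen V.2.1) V.2.2
  choose δ hδ using hδ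
  set G : {V : Set X // V ∈ B ∧ V.Nonempty} × M → Set X :=
    fun p => {x | {n : ℕ | (T ^ n) x ∈ p.1.1} ∈ 𝓐 (δ p.1) p.2} with hG
  have hGopen : ∀ p, IsOpen (G p) := by
    rintro ⟨V, μ⟩
    rw [isOpen_iff_mem_nhds]
    intro x hx
    obtain ⟨F, hF⟩ := hi (δ V) μ _ hx
    set F' : Finset ℕ := F.filter (fun n => (T ^ n) x ∈ V.1) with hF'
    have hW : IsOpen (⋂ n ∈ F', (T ^ n) ⁻¹' V.1) :=
      isOpen_biInter_finset (fun n _ =>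
        (hbasis.isOpen V.2.1).preimage (T ^ n).continuous)
    have hxW : x ∈ ⋂ n ∈ F', (T ^ n) ⁻¹' V.1 := by
      simp only [Set.mem_iInter]
      intro n hn
      exact (Finset.mem_filter.mp hn).2
    refine Filter.mem_of_superset (hW.mem_nhds hxW) ?_
    intro y hy
    refine hF _ ?_
    rintro n ⟨hn1, hn2⟩
    have hn' : n ∈ F' := Finset.mem_filter.mpr ⟨hn2, hn1⟩
    exact Set.mem_iInter₂.mp hy n hn'
  have hGdense : ∀ p, Dense (G p) := by
    rintro ⟨V, μ⟩
    rw [dense_iff_inter_open]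
    intro U hU hUne
    obtain ⟨x, hxU, hxG⟩ := hδ V U hU hUne μ
    exact ⟨x, hxU, hxG⟩
  have hdense : Dense (⋂ p, G p) := dense_iInter_of_isOpen hGopen hGdense
  obtain ⟨x, hx⟩ := hdense.nonempty
  refine ⟨x, fun U hU hUne => ?_⟩
  obtain ⟨z, hzU⟩ := hUne
  obtain ⟨V, hVB, hzV, hVU⟩ := hbasis.exists_subset_of_mem_open hzU hU
  have hVne : V.Nonempty := ⟨z, hzV⟩
  have hA : ∃ d, ∀ μ, {n : ℕ | (T ^ n) x ∈ V} ∈ 𝓐 d μ := by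
    refine ⟨δ ⟨V, hVB, hVne⟩, fun μ => ?_⟩
    exact Set.mem_iInter.mp hx ⟨⟨V, hVB, hVne⟩, μ⟩
  exact hup _ _ hA (fun n hn => hVU hn)
end

section
/- Let T be a bounded invertible operator on a separable Banach space X. If x is a hypercyclic vector for T, then for every pair of nonempty open sets U, V ⊆ X there exists n ≥ 0 such that T^{-n}(U) ∩ V ≠ ∅; consequently T⁻¹ is topologically transitive. -/
theorem inverse_topologically_transitive
    {X : Type*} [NormedAddCommGroup X] [NormedSpace ℝ X] [CompleteSpace X]
    [TopologicalSpace.SeparableSpace X]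
    (T : X ≃L[ℝ] X) (x : X)
    (hx : Dense (Set.range fun n : ℕ => ((T : X →L[ℝ] X) ^ n) x)) :
    (∀ U V : Set X, IsOpen U → IsOpen V → U.Nonempty → V.Nonempty →
      ∃ n : ℕ, ((((T : X →L[ℝ] X) ^ n) ⁻¹' U) ∩ V).Nonempty) ∧
    (∀ U V : Set X, IsOpen U → IsOpen V → U.Nonempty → V.Nonempty →
      ∃ n : ℕ, ((((T.symm : X →L[ℝ] X) ^ n) '' U) ∩ V).Nonempty) := by
  have cancel2 : ∀ (n : ℕ) (z : X),
      ((T.symm : X →L[ℝ] X) ^ n) (((T : X →L[ℝ] X) ^ n) z) = z := by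
    intro n
    induction n with
    | zero => intro z; simp
    | succ n ih =>
      intro z
      rw [pow_succ' (T.symm : X →L[ℝ] X), pow_succ (T : X →L[ℝ] X)]
      simp only [ContinuousLinearMap.mul_apply]
      rw [ih]; simp
  have main : ∀ U V : Set X, IsOpen U → IsOpen V → U.Nonempty → V.Nonempty →
      ∃ n : ℕ, ((((T : X →L[ℝ] X) ^ n) ⁻¹' U) ∩ V).Nonempty := by
    intro U V hU hV hUne hVne
    obtain ⟨_, ⟨m, rfl⟩, hmV⟩ := hx.exists_mem_open hV hVne
    have htail : Dense (Set.range fun k : ℕ => ((T : X →L[ℝ] X) ^ (m + k)) x) := by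
      rcases subsingleton_or_nontrivial X with hS | hN
      · intro y
        have : y = ((T : X →L[ℝ] X) ^ (m + 0)) x := Subsingleton.elim _ _
        exact subset_closure ⟨0, this.symm⟩
      · have hfin : (Set.Finite ((fun j : ℕ => ((T : X →L[ℝ] X) ^ j) x) '' Set.Iio m)) :=
          (Set.finite_Iio m).image _
        have hsub : (Set.range fun n : ℕ => ((T : X →L[ℝ] X) ^ n) x) \
            ((fun j : ℕ => ((T : X →L[ℝ] X) ^ j) x) '' Set.Iio m) ⊆
            Set.range fun k : ℕ => ((T : X →L[ℝ] X) ^ (m + k)) x := by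
          rintro y ⟨⟨n, rfl⟩, hy⟩
          rcases le_or_gt m n with h | h
          · refine ⟨n - m, ?_⟩
            show ((T : X →L[ℝ] X) ^ (m + (n - m))) x = ((T : X →L[ℝ] X) ^ n) x
            rw [Nat.add_sub_cancel' h]
          · exact absurd ⟨n, h, rfl⟩ hy
        exact Dense.mono hsub (hx.diff_finite hfin)
    obtain ⟨_, ⟨k, rfl⟩, hkU⟩ := htail.exists_mem_open hU hUne
    refine ⟨k, ((T : X →L[ℝ] X) ^ m) x, ?_, hmV⟩
    have : ((T : X →L[ℝ] X) ^ k) (((T : X →L[ℝ] X) ^ m) x)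
        = ((T : X →L[ℝ] X) ^ (m + k)) x := by
      rw [add_comm, pow_add]; rfl
    rw [Set.mem_preimage, this]; exact hkU
  refine ⟨main, ?_⟩
  intro U V hU hV hUne hVne
  obtain ⟨n, y, hyU, hyV⟩ := main U V hU hV hUne hVne
  refine ⟨n, ((T.symm : X →L[ℝ] X) ^ n) (((T : X →L[ℝ] X) ^ n) y), ?_, ?_⟩
  · exact ⟨((T : X →L[ℝ] X) ^ n) y, hyU, rfl⟩
  · rw [cancel2 n y]; exact hyV
end
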